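/- Let G be a finite simple graph, let T be a clique in G, and let z be a vertex of T with deg(z) = |T| − 1. Then z is either a critical vertex or an uncritical vertex of G, and consequently Z(G∖z) ∈ {Z(G), Z(G) − 1}. -/

import Mathlib

/-!  Common definitions: zero forcing (standard, loop, positive semidefinite),
zero-nonzero patterns, triangles, and related graph parameters. -/

variable {V : Type*}

/-- Standard zero forcing rule: with filled set `S`, the filled vertex `v` can force
its unique unfilled neighbor `u`. -/
def StdForce (G : SimpleGraph V) (S : Set V) (v u : V) : Prop :=
  v ∈ S ∧ u ∉ S ∧ G.Adj v u ∧ ∀ w, G.Adj v w → w ∉ S → w = u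

/-- Adjacency in the looping of `G` with loops at the vertices in `L`
(a vertex counts as its own neighbor iff it has a loop). -/
def LoopAdj (G : SimpleGraph V) (L : Set V) (v w : V) : Prop :=
  G.Adj v w ∨ (v = w ∧ v ∈ L)

/-- Loop zero forcing rule (the forcing vertex need not be filled): `v` can force `u`
if `u` is the only unfilled neighbor of `v` in the looping. -/
def LoopForce (G : SimpleGraph V) (L : Set V) (S : Set V) (v u : V) : Prop :=
  u ∉ S ∧ LoopAdj G L v u ∧ ∀ w, LoopAdj G L v w → w ∉ S → w = u

/-- Positive semidefinite zero forcing rule: the filled vertex `v` can force the unfilled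
vertex `u` if `u` is the only neighbor of `v` in the connected component of `u` of the
subgraph induced by the unfilled vertices. -/
def PsdForce (G : SimpleGraph V) (S : Set V) (v u : V) : Prop :=
  v ∈ S ∧ u ∉ S ∧ G.Adj v u ∧
    ∀ w, G.Adj v w → w ∉ S →
      Relation.ReflTransGen (fun a b => G.Adj a b ∧ a ∉ S ∧ b ∉ S) u w → w = u

/-- The vertices performing a force in a forcing sequence. -/
def sourcesOf (seq : List (V × V)) : Set V := {v | ∃ p ∈ seq, p.1 = v}

/-- The vertices that get forced in a forcing sequence. -/
def targetsOf (seq : List (V × V)) : Set V := {u | ∃ p ∈ seq, p.2 = u}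

/-- The filled set after performing all forces of `seq` starting from `F`. -/
def filledAfter (F : Set V) (seq : List (V × V)) : Set V := F ∪ targetsOf seq

/-- `ValidSeq rule seq F`: starting with `F` as the filled set, the sequence of forces
`seq` is permitted (each force in turn is allowed by `rule`, and each vertex forces
at most once). -/
def ValidSeq (rule : Set V → V → V → Prop) : List (V × V) → Set V → Prop
  | [], _ => True
  | (v, u) :: rest, F => rule F v u ∧ (∀ p ∈ rest, p.1 ≠ v) ∧ ValidSeq rule rest (insert u F)

/-- `F` is a zero forcing set w.r.t. the forcing rule `rule`. -/
def IsZFSet (rule : Set V → V → V → Prop) (F : Set V) : Prop :=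
  ∃ seq : List (V × V), ValidSeq rule seq F ∧ filledAfter F seq = Set.univ

/-- `F` is a zero forcing set (w.r.t. `rule`) from which `R` can be the set of vertices
that force: some (automatically complete) forcing sequence from `F` fills every vertex
and the set of vertices performing a force is exactly `R`. -/
def ForcesWith (rule : Set V → V → V → Prop) (F R : Set V) : Prop :=
  ∃ seq : List (V × V), ValidSeq rule seq F ∧ filledAfter F seq = Set.univ ∧
    sourcesOf seq = R

/-- The zero forcing number w.r.t. a forcing rule. -/
noncomputable def Znum (rule : Set V → V → V → Prop) : ℕ :=
  sInf {n | ∃ F : Set V, IsZFSet rule F ∧ F.ncard = n}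

/-- The (standard) zero forcing number `Z(G)`. -/
noncomputable def Z (G : SimpleGraph V) : ℕ := Znum (StdForce G)

/-- The zero forcing number of the looping of `G` with loops at `L`. -/
noncomputable def Zloop (G : SimpleGraph V) (L : Set V) : ℕ := Znum (LoopForce G L)

/-- The positive semidefinite zero forcing number `Z₊(G)`. -/
noncomputable def Zplus (G : SimpleGraph V) : ℕ := Znum (PsdForce G)

/-- The enhanced zero forcing number `Ẑ(G)`: the maximum over all loopings of `G` of the
zero forcing number of the looping. -/
noncomputable def Zhat (G : SimpleGraph V) : ℕ := sSup {n | ∃ L : Set V, Zloop G L = n}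

/-- `F` is a direct zero forcing set for `G`: some forcing sequence from `F` fills every
vertex and every vertex that performs a force belongs to `F`. -/
def IsDirectZFSet (G : SimpleGraph V) (F : Set V) : Prop :=
  ∃ seq : List (V × V), ValidSeq (StdForce G) seq F ∧ filledAfter F seq = Set.univ ∧
    sourcesOf seq ⊆ F

/-- The direct zero forcing number `Z_d(G)`. -/
noncomputable def Zd (G : SimpleGraph V) : ℕ :=
  sInf {n | ∃ F : Set V, IsDirectZFSet G F ∧ F.ncard = n}

/-- A zero-nonzero pattern `Y` (entry `Y i j` means the `(i,j)` entry is `*`)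
has a `k × k` submatrix that is a triangle. -/
def HasTriOfSize {ρ γ : Type*} (Y : ρ → γ → Prop) (k : ℕ) : Prop :=
  ∃ (r : Fin k → ρ) (c : Fin k → γ), Function.Injective r ∧ Function.Injective c ∧
    (∀ i, Y (r i) (c i)) ∧ ∀ i j : Fin k, i < j → ¬ Y (r i) (c j)

/-- The triangle number `tri(Y)` of a zero-nonzero pattern. -/
noncomputable def tri {ρ γ : Type*} (Y : ρ → γ → Prop) : ℕ := sSup {k | HasTriOfSize Y k}

/-- Membership in `S_znz(G)`: off the diagonal, the pattern matches the adjacency of `G`. -/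
def InSznz (G : SimpleGraph V) (A : V → V → Prop) : Prop :=
  ∀ i j : V, i ≠ j → (A i j ↔ G.Adj i j)

/-- The zero-nonzero pattern of the looping of `G` with loops at `L`. -/
def loopPattern (G : SimpleGraph V) (L : Set V) : V → V → Prop :=
  fun i j => (i = j ∧ i ∈ L) ∨ (i ≠ j ∧ G.Adj i j)

/-- The submatrix of the pattern `Y` with rows `R` and columns `C` is a triangle:
there are enumerations of `R` and `C` realizing a lower-triangular pattern with `*`
diagonal (in particular `|R| = |C|`). -/
def SubIsTriangle {ρ γ : Type*} (Y : ρ → γ → Prop) (R : Finset ρ) (C : Finset γ) : Prop :=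
  ∃ (k : ℕ) (r : Fin k → ρ) (c : Fin k → γ),
    Function.Injective r ∧ Function.Injective c ∧
    (∀ x : ρ, x ∈ R ↔ ∃ i, r i = x) ∧ (∀ y : γ, y ∈ C ↔ ∃ i, c i = y) ∧
    (∀ i, Y (r i) (c i)) ∧ ∀ i j : Fin k, i < j → ¬ Y (r i) (c j)

/-- `(R, C)` is a persistent triangle of `G`. -/
def PersistentTriangle (G : SimpleGraph V) (R C : Finset V) : Prop :=
  ∀ A : V → V → Prop, InSznz G A → SubIsTriangle A R C

/-- `F` is a direct zero forcing set for `G` from which `R` can be the set of vertices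
that force. -/
def DirectForcesWith (G : SimpleGraph V) (F R : Set V) : Prop :=
  ∃ seq : List (V × V), ValidSeq (StdForce G) seq F ∧ filledAfter F seq = Set.univ ∧
    sourcesOf seq = R ∧ R ⊆ F

/-- `(range r, range c)` is a partition of `G` according to the `m × n` pattern `Y`,
with labelings given by `r` and `c`. -/
def PartitionAccording (G : SimpleGraph V) {m n : ℕ} (Y : Fin m → Fin n → Prop)
    (r : Fin m → V) (c : Fin n → V) : Prop :=
  Function.Injective r ∧ Function.Injective c ∧ (∀ i j, r i ≠ c j) ∧
    (∀ v : V, (∃ i, r i = v) ∨ (∃ j, c j = v)) ∧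
    ∀ i j, G.Adj (r i) (c j) ↔ Y i j

/-- `F` is a zero forcing set for `G` that forces from `V1` to `V2`. -/
def ForcesFromTo (G : SimpleGraph V) (F V1 V2 : Set V) : Prop :=
  V1 ⊆ F ∧ ∃ seq : List (V × V), ValidSeq (StdForce G) seq F ∧
    filledAfter F seq = Set.univ ∧ sourcesOf seq ⊆ V1 ∧ targetsOf seq ⊆ V2

/-- `(V1, V2)` is a partition of the vertex set of `G` into two cliques. -/
def IsCliquePartition (G : SimpleGraph V) (V1 V2 : Set V) : Prop :=
  Disjoint V1 V2 ∧ V1 ∪ V2 = Set.univ ∧ G.IsClique V1 ∧ G.IsClique V2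

/-- `G` is cobipartite. -/
def Cobipartite (G : SimpleGraph V) : Prop := ∃ V1 V2 : Set V, IsCliquePartition G V1 V2

/-- `G` is the cobipartite graph associated with the pattern `Y`, via labelings `r`, `c`. -/
def CobipAssociated (G : SimpleGraph V) {m n : ℕ} (Y : Fin m → Fin n → Prop)
    (r : Fin m → V) (c : Fin n → V) : Prop :=
  PartitionAccording G Y r c ∧ G.IsClique (Set.range r) ∧ G.IsClique (Set.range c)

/-- `z` is a critical vertex: some optimal forcing sequence neither lets `z` force
nor forces `z`. -/
def Critical (G : SimpleGraph V) (z : V) : Prop :=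
  ∃ (F : Set V) (seq : List (V × V)), F.ncard = Z G ∧ ValidSeq (StdForce G) seq F ∧
    filledAfter F seq = Set.univ ∧ z ∉ sourcesOf seq ∧ z ∉ targetsOf seq

/-- `z` is an uncritical vertex: in every optimal forcing sequence, exactly one of the
following holds: `z` performs a force, or `z` gets forced. -/
def Uncritical (G : SimpleGraph V) (z : V) : Prop :=
  ∀ (F : Set V) (seq : List (V × V)), F.ncard = Z G → ValidSeq (StdForce G) seq F →
    filledAfter F seq = Set.univ → (z ∈ sourcesOf seq ↔ z ∉ targetsOf seq)

/-- The maximum nullity `M(G)` over the field `𝔽`. -/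
noncomputable def Mnum (𝔽 : Type*) [Field 𝔽] [Fintype V] [DecidableEq V]
    (G : SimpleGraph V) : ℕ :=
  sSup {k | ∃ A : Matrix V V 𝔽, A.IsSymm ∧ (∀ i j : V, i ≠ j → (A i j ≠ 0 ↔ G.Adj i j)) ∧
    k = Fintype.card V - A.rank}

/-- The minimum rank `mr_𝔽(Y)` of a zero-nonzero pattern over the field `𝔽`. -/
noncomputable def mr (𝔽 : Type*) [Field 𝔽] {m n : ℕ} (Y : Fin m → Fin n → Prop) : ℕ :=
  sInf {k | ∃ A : Matrix (Fin m) (Fin n) 𝔽, (∀ i j, A i j ≠ 0 ↔ Y i j) ∧ A.rank = k}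

/-- `G` is a `k`-tree: there is a construction ordering of the vertices in which the
first `k+1` vertices form a clique and every later vertex is adjacent among the earlier
vertices to exactly a `k`-clique. -/
def IsKTree (k : ℕ) [Fintype V] (G : SimpleGraph V) : Prop :=
  k + 1 ≤ Fintype.card V ∧ ∃ ord : V ≃ Fin (Fintype.card V),
    (∀ u v : V, (ord u : ℕ) < k + 1 → (ord v : ℕ) < k + 1 → u ≠ v → G.Adj u v) ∧
    ∀ v : V, k + 1 ≤ (ord v : ℕ) →
      G.IsClique {u : V | (ord u : ℕ) < (ord v : ℕ) ∧ G.Adj u v} ∧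
      {u : V | (ord u : ℕ) < (ord v : ℕ) ∧ G.Adj u v}.ncard = k

section Helpers

open Set

lemma mem_sourcesOf {seq : List (V × V)} {x : V} :
    x ∈ sourcesOf seq ↔ ∃ p ∈ seq, p.1 = x := Iff.rfl

lemma mem_targetsOf {seq : List (V × V)} {x : V} :
    x ∈ targetsOf seq ↔ ∃ p ∈ seq, p.2 = x := Iff.rfl

@[simp] lemma sourcesOf_nil : sourcesOf ([] : List (V × V)) = ∅ := by
  ext x; simp [sourcesOf]

@[simp] lemma targetsOf_nil : targetsOf ([] : List (V × V)) = ∅ := by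
  ext x; simp [targetsOf]

@[simp] lemma sourcesOf_cons (p : V × V) (l : List (V × V)) :
    sourcesOf (p :: l) = insert p.1 (sourcesOf l) := by
  obtain ⟨a, b⟩ := p
  ext x; simp [sourcesOf, Prod.ext_iff]; aesop

@[simp] lemma targetsOf_cons (p : V × V) (l : List (V × V)) :
    targetsOf (p :: l) = insert p.2 (targetsOf l) := by
  obtain ⟨a, b⟩ := p
  ext x; simp [targetsOf, Prod.ext_iff]; aesop

@[simp] lemma sourcesOf_append (l1 l2 : List (V × V)) :
    sourcesOf (l1 ++ l2) = sourcesOf l1 ∪ sourcesOf l2 := by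
  ext x; simp [sourcesOf, or_and_right, exists_or]

@[simp] lemma targetsOf_append (l1 l2 : List (V × V)) :
    targetsOf (l1 ++ l2) = targetsOf l1 ∪ targetsOf l2 := by
  ext x; simp [targetsOf, or_and_right, exists_or]

lemma validSeq_append {rule : Set V → V → V → Prop} :
    ∀ (l1 l2 : List (V × V)) (F : Set V),
    ValidSeq rule (l1 ++ l2) F ↔
      ValidSeq rule l1 F ∧ ValidSeq rule l2 (F ∪ targetsOf l1) ∧
        ∀ x ∈ sourcesOf l2, x ∉ sourcesOf l1 := by
  intro l1
  induction l1 with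
  | nil =>
    intro l2 F
    simp [ValidSeq]
  | cons q l ih =>
    intro l2 F
    obtain ⟨v, u⟩ := q
    constructor
    · rintro ⟨hf, hd, hrest⟩
      have hrest : ValidSeq rule (l ++ l2) (insert u F) := hrest
      rw [ih] at hrest
      obtain ⟨h1, h2, h3⟩ := hrest
      refine ⟨⟨hf, ?_, h1⟩, ?_, ?_⟩
      · intro p hp; exact hd p (List.mem_append_left _ hp)
      · have : F ∪ targetsOf ((v, u) :: l) = insert u F ∪ targetsOf l := by
          rw [targetsOf_cons]; ext y; simp; tauto
        rw [this]; exact h2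
      · intro x hx
        rw [sourcesOf_cons, Set.mem_insert_iff]
        rintro (rfl | hx1)
        · obtain ⟨p, hp, hp1⟩ := hx
          exact hd p (List.mem_append_right _ hp) hp1
        · exact h3 x hx hx1
    · rintro ⟨⟨hf, hd, h1⟩, h2, h3⟩
      refine ⟨hf, ?_, ?_⟩
      · intro p hp
        rcases List.mem_append.1 hp with h | h
        · exact hd p h
        · intro hpv
          exact h3 v ⟨p, h, hpv⟩ (by rw [sourcesOf_cons]; exact Set.mem_insert _ _)
      · show ValidSeq rule (l ++ l2) (insert u F)
        rw [ih]
        refine ⟨h1, ?_, ?_⟩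
        · have : F ∪ targetsOf ((v, u) :: l) = insert u F ∪ targetsOf l := by
            rw [targetsOf_cons]; ext y; simp; tauto
          rw [← this]; exact h2
        · intro x hx hx1
          exact h3 x hx (by rw [sourcesOf_cons]; exact Set.mem_insert_of_mem _ hx1)

lemma target_not_mem {G : SimpleGraph V} :
    ∀ {seq : List (V × V)} {S : Set V}, ValidSeq (StdForce G) seq S →
      ∀ p ∈ seq, p.2 ∉ S := by
  intro seq
  induction seq with
  | nil => intro S _ p hp; simp at hp
  | cons q l ih =>
    obtain ⟨v, u⟩ := q
    rintro S ⟨hf, _, hrest⟩ p hp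
    rcases List.mem_cons.1 hp with rfl | hp
    · exact hf.2.1
    · intro hpS
      exact ih hrest p hp (Set.mem_insert_of_mem _ hpS)

lemma valid_insert {G : SimpleGraph V} :
    ∀ {seq : List (V × V)} {S : Set V} {u : V}, ValidSeq (StdForce G) seq S →
      u ∉ targetsOf seq → ValidSeq (StdForce G) seq (insert u S) := by
  intro seq
  induction seq with
  | nil => intro S u _ _; trivial
  | cons q l ih =>
    obtain ⟨v, w⟩ := q
    rintro S u ⟨hf, hd, hrest⟩ hu
    rw [targetsOf_cons, Set.mem_insert_iff] at hu
    push_neg at hu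
    refine ⟨⟨Set.mem_insert_of_mem _ hf.1, ?_, hf.2.2.1, ?_⟩, hd, ?_⟩
    · rw [Set.mem_insert_iff]; push_neg
      exact ⟨fun h => hu.1 h.symm, hf.2.1⟩
    · intro x hx hx2
      rw [Set.mem_insert_iff] at hx2; push_neg at hx2
      exact hf.2.2.2 x hx hx2.2
    · rw [Set.insert_comm]
      exact ih hrest hu.2

lemma exists_rule_superset {rule : Set V → V → V → Prop} :
    ∀ {seq : List (V × V)} {S : Set V}, ValidSeq rule seq S →
      ∀ p ∈ seq, ∃ S', S ⊆ S' ∧ rule S' p.1 p.2 := by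
  intro seq
  induction seq with
  | nil => intro S _ p hp; simp at hp
  | cons q l ih =>
    obtain ⟨v, u⟩ := q
    rintro S ⟨hf, _, hrest⟩ p hp
    rcases List.mem_cons.1 hp with rfl | hp
    · exact ⟨S, subset_rfl, hf⟩
    · obtain ⟨S', hS', hr⟩ := ih hrest p hp
      exact ⟨S', (Set.subset_insert _ _).trans hS', hr⟩

lemma no_source_and_target {G : SimpleGraph V} {z : V}
    (hclq : ∀ a b, G.Adj z a → G.Adj z b → a ≠ b → G.Adj a b) :
    ∀ {seq : List (V × V)} {F : Set V}, ValidSeq (StdForce G) seq F →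
      z ∈ sourcesOf seq → z ∈ targetsOf seq → False := by
  intro seq
  induction seq with
  | nil => intro F _ hs _; simp at hs
  | cons q l ih =>
    obtain ⟨v, u⟩ := q
    rintro F ⟨hf, hd, hrest⟩ hs ht
    rw [sourcesOf_cons, Set.mem_insert_iff] at hs
    rw [targetsOf_cons, Set.mem_insert_iff] at ht
    by_cases hv : v = z
    · -- z forces now; z ∈ F, so z cannot be a target anywhere
      subst hv
      have hvF : v ∈ F := hf.1
      rcases ht with rfl | ht
      · exact G.loopless.irrefl v hf.2.2.1
      · obtain ⟨p, hp, hp2⟩ := ht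
        have := target_not_mem hrest p hp
        rw [hp2] at this
        exact this (Set.mem_insert_of_mem _ hvF)
    · by_cases hu : u = z
      · -- z is forced now; z forces later
        subst hu
        rcases hs with rfl | hs
        · exact hv rfl
        · obtain ⟨p, hp, hp1⟩ := hs
          obtain ⟨S', hS', hr⟩ := exists_rule_superset hrest p hp
          rw [hp1] at hr
          -- hr : StdForce G S' u p.2 , with insert u F ⊆ S'
          have hadj1 : G.Adj u v := (hf.2.2.1).symm
          have hadj2 : G.Adj u p.2 := hr.2.2.1
          have hne : p.2 ≠ v := by
            rintro rfl
            exact hr.2.1 (hS' (Set.mem_insert_of_mem _ hf.1))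
          have hadjvp : G.Adj v p.2 := hclq v p.2 hadj1 hadj2 (Ne.symm hne)
          have hp2F : p.2 ∉ F := by
            intro h
            exact hr.2.1 (hS' (Set.mem_insert_of_mem _ h))
          have := hf.2.2.2 p.2 hadjvp hp2F
          exact (G.loopless.irrefl u) (this ▸ hadj2)
      · -- neither involved in the first force
        apply ih hrest
        · rcases hs with rfl | hs
          · exact absurd rfl hv
          · exact hs
        · rcases ht with rfl | ht
          · exact absurd rfl hu
          · exact ht


lemma preimage_insert_ne {z a : V} (S : Set V) (ha : a ≠ z) :
    (Subtype.val ⁻¹' (insert a S) : Set ({z}ᶜ : Set V)) =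
      insert ⟨a, by simp [ha]⟩ (Subtype.val ⁻¹' S) := by
  ext w; simp [Subtype.ext_iff]

lemma preimage_insert_z {z : V} (S : Set V) :
    (Subtype.val ⁻¹' (insert z S) : Set ({z}ᶜ : Set V)) = Subtype.val ⁻¹' S := by
  ext w
  have : (w : V) ≠ z := w.2
  simp [this]

lemma proj_valid (G : SimpleGraph V) (z : V) :
    ∀ (seq : List (V × V)) (S : Set V),
      ValidSeq (StdForce G) seq S →
      (∀ p ∈ seq, p.1 ≠ z ∧ p.2 ≠ z) →
      ∃ seq' : List (({z}ᶜ : Set V) × ({z}ᶜ : Set V)),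
        ValidSeq (StdForce (G.induce ({z}ᶜ : Set V))) seq' (Subtype.val ⁻¹' S) ∧
        targetsOf seq' = Subtype.val ⁻¹' targetsOf seq ∧
        sourcesOf seq' = Subtype.val ⁻¹' sourcesOf seq := by
  intro seq
  induction seq with
  | nil => exact fun S _ _ => ⟨[], trivial, by simp, by simp⟩
  | cons p rest ih =>
    intro S hval hz
    obtain ⟨v, u⟩ := p
    obtain ⟨hf, hdist, hrest⟩ := hval
    obtain ⟨hv1, hv2⟩ := hz (v, u) List.mem_cons_self
    obtain ⟨seq', hval', ht', hs'⟩ :=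
      ih (insert u S) hrest (fun p hp => hz p (List.mem_cons_of_mem _ hp))
    refine ⟨(⟨v, by simp [hv1]⟩, ⟨u, by simp [hv2]⟩) :: seq', ⟨?_, ?_, ?_⟩, ?_, ?_⟩
    · refine ⟨hf.1, hf.2.1, ?_, ?_⟩
      · simpa using hf.2.2.1
      · intro w hadj hw
        apply Subtype.ext
        exact hf.2.2.2 (w : V) (by simpa using hadj) hw
    · intro q hq hq1
      have h1 : q.1 ∈ sourcesOf seq' := ⟨q, hq, rfl⟩
      rw [hs', Set.mem_preimage] at h1
      obtain ⟨r, hr, hr1⟩ := h1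
      exact hdist r hr (by rw [hr1, hq1])
    · rw [← preimage_insert_ne S hv2]
      exact hval'
    · rw [targetsOf_cons, targetsOf_cons, preimage_insert_ne _ hv2, ht']
    · rw [sourcesOf_cons, sourcesOf_cons, preimage_insert_ne _ hv1, hs']

lemma lift_valid (G : SimpleGraph V) (z : V) :
    ∀ (seq' : List (({z}ᶜ : Set V) × ({z}ᶜ : Set V))) (S : Set ({z}ᶜ : Set V)),
      ValidSeq (StdForce (G.induce ({z}ᶜ : Set V))) seq' S →
      ValidSeq (StdForce G) (seq'.map fun p => ((p.1 : V), (p.2 : V)))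
        (insert z (Subtype.val '' S)) ∧
      targetsOf (seq'.map fun p => ((p.1 : V), (p.2 : V))) =
        Subtype.val '' targetsOf seq' := by
  intro seq'
  induction seq' with
  | nil => exact fun S _ => ⟨trivial, by simp⟩
  | cons p rest ih =>
    intro S hval
    obtain ⟨v, u⟩ := p
    obtain ⟨hf, hdist, hrest⟩ := hval
    have hins : insert (u : V) (insert z (Subtype.val '' S)) =
        insert z (Subtype.val '' insert u S) := by
      rw [Set.image_insert_eq, Set.insert_comm]
    obtain ⟨hrest', ht'⟩ := ih (insert u S) hrest
    rw [← hins] at hrest'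
    refine ⟨⟨?_, ?_, ?_⟩, ?_⟩
    · refine ⟨Set.mem_insert_of_mem _ ⟨v, hf.1, rfl⟩, ?_, by simpa using hf.2.2.1, ?_⟩
      · rw [Set.mem_insert_iff]
        push_neg
        refine ⟨u.2, ?_⟩
        rintro ⟨s, hs, hsu⟩
        exact hf.2.1 (by rwa [Subtype.val_injective hsu] at hs)
      · intro w hadj hw
        rw [Set.mem_insert_iff] at hw
        push_neg at hw
        have hwz : w ∈ ({z}ᶜ : Set V) := hw.1
        have : (⟨w, hwz⟩ : ({z}ᶜ : Set V)) = u := by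
          apply hf.2.2.2 ⟨w, hwz⟩ (by simpa using hadj)
          intro hmem
          exact hw.2 ⟨_, hmem, rfl⟩
        exact congrArg Subtype.val this
    · intro q hq
      obtain ⟨r, hr, rfl⟩ := List.mem_map.1 hq
      intro h
      exact hdist r hr (Subtype.val_injective h)
    · exact hrest'
    · rw [List.map_cons, targetsOf_cons, targetsOf_cons, ht', Set.image_insert_eq]

lemma znum_le {rule : Set V → V → V → Prop} {F : Set V} (h : IsZFSet rule F) :
    Znum rule ≤ F.ncard := Nat.sInf_le ⟨F, h, rfl⟩

lemma exists_opt [Finite V] (rule : Set V → V → V → Prop) :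
    ∃ F : Set V, IsZFSet rule F ∧ F.ncard = Znum rule := by
  have hne : {n | ∃ F : Set V, IsZFSet rule F ∧ F.ncard = n}.Nonempty := by
    refine ⟨(Set.univ : Set V).ncard, Set.univ, ⟨[], trivial, ?_⟩, rfl⟩
    simp [filledAfter]
  exact Nat.sInf_mem hne

lemma ncard_preimage [Finite V] (z : V) (F : Set V) :
    (Subtype.val ⁻¹' F : Set ({z}ᶜ : Set V)).ncard = (F \ {z}).ncard := by
  rw [← Set.ncard_image_of_injective _ Subtype.val_injective,
    Subtype.image_preimage_coe]
  congr 1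
  ext x
  simp [and_comm]

end Helpers

/-- If `T` is a clique in `G` and `z ∈ T` has degree `|T| − 1`, then
`z` is critical or uncritical, and consequently `Z(G∖z) ∈ {Z(G), Z(G) − 1}`. -/
theorem critical_or_uncritical_of_simplicial
    {V : Type*} [Fintype V] [DecidableEq V] (G : SimpleGraph V) (T : Finset V)
    (hT : G.IsClique (↑T : Set V)) (z : V) (hz : z ∈ T)
    (hdeg : (G.neighborSet z).ncard = T.card - 1) :
    (Critical G z ∨ Uncritical G z) ∧
      (Z (G.induce ({z}ᶜ : Set V)) = Z G ∨ Z (G.induce ({z}ᶜ : Set V)) = Z G - 1) := by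
  classical
  have hNz : (↑(T.erase z) : Set V) = G.neighborSet z := by
    apply Set.eq_of_subset_of_ncard_le
    · intro a ha
      rw [Finset.coe_erase, Set.mem_diff] at ha
      have haT : a ∈ (↑T : Set V) := ha.1
      have haz : z ≠ a := fun h => ha.2 (by simp [h])
      exact hT (Finset.mem_coe.mpr hz) haT haz
    · rw [hdeg, Set.ncard_coe_finset, Finset.card_erase_of_mem hz]
    · exact (G.neighborSet z).toFinite
  have hclq : ∀ a b, G.Adj z a → G.Adj z b → a ≠ b → G.Adj a b := by
    intro a b ha hb hab
    have ha' : a ∈ (↑T : Set V) := by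
      have h1 : a ∈ G.neighborSet z := ha
      rw [← hNz] at h1
      exact Finset.mem_coe.mpr (Finset.mem_of_mem_erase (Finset.mem_coe.mp h1))
    have hb' : b ∈ (↑T : Set V) := by
      have h1 : b ∈ G.neighborSet z := hb
      rw [← hNz] at h1
      exact Finset.mem_coe.mpr (Finset.mem_of_mem_erase (Finset.mem_coe.mp h1))
    exact hT ha' hb' hab
  have hboth : ∀ (F : Set V) (seq : List (V × V)), ValidSeq (StdForce G) seq F →
      ¬(z ∈ sourcesOf seq ∧ z ∈ targetsOf seq) := by
    rintro F seq hval ⟨hs, ht⟩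
    exact no_source_and_target hclq hval hs ht
  have hdich : Critical G z ∨ Uncritical G z := by
    by_cases hcrit : Critical G z
    · exact Or.inl hcrit
    · refine Or.inr ?_
      intro F seq hF hval hfill
      constructor
      · intro hs ht
        exact hboth F seq hval ⟨hs, ht⟩
      · intro ht
        by_contra hs
        exact hcrit ⟨F, seq, hF, hval, hfill, hs, ht⟩
  have hlb : Z G ≤ Z (G.induce ({z}ᶜ : Set V)) + 1 := by
    obtain ⟨F', ⟨seq', hv', hf'⟩, hc'⟩ := exists_opt (StdForce (G.induce ({z}ᶜ : Set V)))
    obtain ⟨hl, hlt⟩ := lift_valid G z seq' F' hv'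
    have hzf : IsZFSet (StdForce G) (insert z (Subtype.val '' F')) := by
      refine ⟨_, hl, ?_⟩
      rw [filledAfter, hlt, Set.insert_union, ← Set.image_union]
      rw [filledAfter] at hf'
      rw [hf', Set.image_univ, Subtype.range_coe]
      rw [Set.eq_univ_iff_forall]
      intro x
      by_cases hx : x = z <;> simp [hx]
    have h1 := znum_le hzf
    have hcard : (insert z (Subtype.val '' F')).ncard = F'.ncard + 1 := by
      rw [Set.ncard_insert_of_notMem, Set.ncard_image_of_injective _ Subtype.val_injective]
      rintro ⟨s, _, hs⟩
      exact s.2 hs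
    rw [hcard, hc'] at h1
    exact h1
  have hub : Z (G.induce ({z}ᶜ : Set V)) ≤ Z G := by
    obtain ⟨F, ⟨seq, hval, hfill⟩, hcard⟩ := exists_opt (StdForce G)
    by_cases hsz : z ∈ sourcesOf seq
    · -- z performs a force
      have htz : z ∉ targetsOf seq := fun ht => hboth F seq hval ⟨hsz, ht⟩
      obtain ⟨p, hp, hp1⟩ := hsz
      obtain ⟨l1, l2, rfl⟩ := List.append_of_mem hp
      obtain ⟨v0, u⟩ := p
      simp only at hp1
      have hp1' : z = v0 := hp1.symm
      subst hp1'
      rw [targetsOf_append, targetsOf_cons] at htz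
      simp only [Set.mem_union, Set.mem_insert_iff] at htz
      push_neg at htz
      obtain ⟨hzT1, hzu, hzT2⟩ := htz
      rw [validSeq_append] at hval
      obtain ⟨h1, ⟨hfz, hd2, h2'⟩, hcross⟩ := hval
      have hzF : z ∈ F := by
        rcases hfz.1 with h | h
        · exact h
        · exact absurd h hzT1
      have huF : u ∉ F := fun h => hfz.2.1 (Set.mem_union_left _ h)
      have huT1 : u ∉ targetsOf l1 := fun h => hfz.2.1 (Set.mem_union_right _ h)
      have huz : u ≠ z := fun h => hfz.2.1 (h ▸ Set.mem_union_left _ hzF)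
      have hcomp1 : ∀ p ∈ l1, p.1 ≠ z ∧ p.2 ≠ z := by
        intro p hp1'
        constructor
        · intro h
          exact hcross z (by rw [sourcesOf_cons]; exact Set.mem_insert _ _) ⟨p, hp1', h⟩
        · intro h
          exact hzT1 ⟨p, hp1', h⟩
      have hcomp2 : ∀ p ∈ l2, p.1 ≠ z ∧ p.2 ≠ z := by
        intro p hp2'
        exact ⟨hd2 p hp2', fun h => hzT2 ⟨p, hp2', h⟩⟩
      obtain ⟨s1, hs1v, hs1t, hs1s⟩ :=
        proj_valid G z l1 (insert u F) (valid_insert h1 huT1) hcomp1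
      obtain ⟨s2, hs2v, hs2t, hs2s⟩ :=
        proj_valid G z l2 (insert u (F ∪ targetsOf l1)) h2' hcomp2
      have hstart : (Subtype.val ⁻¹' (insert u (F ∪ targetsOf l1)) : Set ({z}ᶜ : Set V)) =
          (Subtype.val ⁻¹' (insert u F)) ∪ targetsOf s1 := by
        rw [hs1t, ← Set.preimage_union]
        ext x; simp; tauto
      rw [hstart] at hs2v
      have hv : ValidSeq (StdForce (G.induce ({z}ᶜ : Set V))) (s1 ++ s2)
          (Subtype.val ⁻¹' (insert u F)) := by
        rw [validSeq_append]
        refine ⟨hs1v, hs2v, ?_⟩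
        intro x hx hx1
        rw [hs2s, Set.mem_preimage] at hx
        rw [hs1s, Set.mem_preimage] at hx1
        exact hcross (x : V)
          (by rw [sourcesOf_cons]; exact Set.mem_insert_of_mem _ hx) hx1
      have hfillnew : filledAfter (Subtype.val ⁻¹' (insert u F) : Set ({z}ᶜ : Set V))
          (s1 ++ s2) = Set.univ := by
        rw [filledAfter, targetsOf_append, hs1t, hs2t, Set.eq_univ_iff_forall]
        intro w
        have hw : (w : V) ∈ filledAfter F (l1 ++ (z, u) :: l2) := by
          rw [hfill]; trivial
        rw [filledAfter, targetsOf_append, targetsOf_cons] at hw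
        simp only [Set.mem_union, Set.mem_preimage, Set.mem_insert_iff] at hw ⊢
        tauto
      have hle := znum_le ⟨s1 ++ s2, hv, hfillnew⟩
      have hnc : (Subtype.val ⁻¹' (insert u F) : Set ({z}ᶜ : Set V)).ncard = F.ncard := by
        rw [ncard_preimage, ← Set.insert_diff_singleton_comm huz,
          Set.ncard_insert_of_notMem (fun h => huF h.1),
          Set.ncard_diff_singleton_of_mem hzF]
        have : 0 < F.ncard := (Set.ncard_pos (Set.toFinite F)).mpr ⟨z, hzF⟩
        omega
      rw [hnc, hcard] at hle
      exact hle
    · by_cases htz : z ∈ targetsOf seq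
      · -- z gets forced
        obtain ⟨p, hp, hp2⟩ := htz
        obtain ⟨l1, l2, rfl⟩ := List.append_of_mem hp
        obtain ⟨w0, u0⟩ := p
        simp only at hp2
        have hp2' : z = u0 := hp2.symm
        subst hp2'
        rw [sourcesOf_append, sourcesOf_cons] at hsz
        simp only [Set.mem_union, Set.mem_insert_iff] at hsz
        push_neg at hsz
        obtain ⟨hzS1, hzw0, hzS2⟩ := hsz
        rw [validSeq_append] at hval
        obtain ⟨h1, ⟨hfz, hd2, h2'⟩, hcross⟩ := hval
        have hzF : z ∉ F := fun h => hfz.2.1 (Set.mem_union_left _ h)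
        have hzT1 : z ∉ targetsOf l1 := fun h => hfz.2.1 (Set.mem_union_right _ h)
        have hcomp1 : ∀ p ∈ l1, p.1 ≠ z ∧ p.2 ≠ z := by
          intro p hp1'
          exact ⟨fun h => hzS1 ⟨p, hp1', h⟩, fun h => hzT1 ⟨p, hp1', h⟩⟩
        have hcomp2 : ∀ p ∈ l2, p.1 ≠ z ∧ p.2 ≠ z := by
          intro p hp2'
          refine ⟨fun h => hzS2 ⟨p, hp2', h⟩, fun h => ?_⟩
          exact target_not_mem h2' p hp2' (h ▸ Set.mem_insert _ _)
        obtain ⟨s1, hs1v, hs1t, hs1s⟩ := proj_valid G z l1 F h1 hcomp1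
        obtain ⟨s2, hs2v, hs2t, hs2s⟩ :=
          proj_valid G z l2 (insert z (F ∪ targetsOf l1)) h2' hcomp2
        have hstart : (Subtype.val ⁻¹' (insert z (F ∪ targetsOf l1)) : Set ({z}ᶜ : Set V)) =
            (Subtype.val ⁻¹' F) ∪ targetsOf s1 := by
          rw [preimage_insert_z, hs1t, ← Set.preimage_union]
        rw [hstart] at hs2v
        have hv : ValidSeq (StdForce (G.induce ({z}ᶜ : Set V))) (s1 ++ s2)
            (Subtype.val ⁻¹' F) := by
          rw [validSeq_append]
          refine ⟨hs1v, hs2v, ?_⟩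
          intro x hx hx1
          rw [hs2s, Set.mem_preimage] at hx
          rw [hs1s, Set.mem_preimage] at hx1
          exact hcross (x : V)
            (by rw [sourcesOf_cons]; exact Set.mem_insert_of_mem _ hx) hx1
        have hfillnew : filledAfter (Subtype.val ⁻¹' F : Set ({z}ᶜ : Set V))
            (s1 ++ s2) = Set.univ := by
          rw [filledAfter, targetsOf_append, hs1t, hs2t, Set.eq_univ_iff_forall]
          intro w
          have hw : (w : V) ∈ filledAfter F (l1 ++ (w0, z) :: l2) := by
            rw [hfill]; trivial
          have hwz : (w : V) ≠ z := w.2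
          rw [filledAfter, targetsOf_append, targetsOf_cons] at hw
          simp only [Set.mem_union, Set.mem_preimage, Set.mem_insert_iff] at hw ⊢
          tauto
        have hle := znum_le ⟨s1 ++ s2, hv, hfillnew⟩
        have hnc : (Subtype.val ⁻¹' F : Set ({z}ᶜ : Set V)).ncard = F.ncard := by
          rw [ncard_preimage, Set.diff_singleton_eq_self hzF]
        rw [hnc, hcard] at hle
        exact hle
      · -- z is not involved at all
        have hcomp : ∀ p ∈ seq, p.1 ≠ z ∧ p.2 ≠ z := by
          intro p hp
          exact ⟨fun h => hsz ⟨p, hp, h⟩, fun h => htz ⟨p, hp, h⟩⟩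
        have hzF : z ∈ F := by
          have h0 : z ∈ filledAfter F seq := by rw [hfill]; trivial
          rcases h0 with h | h
          · exact h
          · exact absurd h htz
        obtain ⟨s, hsv, hst, _⟩ := proj_valid G z seq F hval hcomp
        have hfillnew : filledAfter (Subtype.val ⁻¹' F : Set ({z}ᶜ : Set V)) s
            = Set.univ := by
          rw [filledAfter, hst, ← Set.preimage_union]
          rw [show F ∪ targetsOf seq = Set.univ from hfill]
          exact Set.preimage_univ
        have hle := znum_le ⟨s, hsv, hfillnew⟩
        have hnc : (Subtype.val ⁻¹' F : Set ({z}ᶜ : Set V)).ncard = F.ncard - 1 := by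
          rw [ncard_preimage, Set.ncard_diff_singleton_of_mem hzF]
        rw [hnc, hcard] at hle
        show Znum (StdForce (G.induce ({z}ᶜ : Set V))) ≤ Znum (StdForce G)
        omega
  exact ⟨hdich, by omega⟩
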